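/- Let x_0, …, x_m (m ≥ 1) be distinct points of the weighted Hamming cube H_W. Then the family (x_0,…,x_m) is affinely independent in ℝⁿ if and only if for every nonzero ξ ∈ ℝ^{m+1} with ∑_i ξ_i = 0 one has ∑_{i,j} d(x_i,x_j) ξ_i ξ_j ≠ 0 (that is, {x_0,…,x_m} admits no nontrivial 1-polygonal equality). -/

import Mathlib

/-- A nontrivial subset of a weighted Hamming cube is affinely independent iff it
admits no nontrivial 1-polygonal equality. -/
theorem stmt7 (n m : ℕ) (hn : 1 ≤ n) (hm : 1 ≤ m) (w : Fin n → ℝ) (hw : ∀ k, 0 < w k)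
    (x : Fin (m + 1) → (Fin n → ℝ))
    (hxH : ∀ i k, x i k = 0 ∨ x i k = w k)
    (hinj : Function.Injective x) :
    AffineIndependent ℝ x ↔
      (∀ ξ : Fin (m + 1) → ℝ, ξ ≠ 0 → ∑ i, ξ i = 0 →
        ∑ i, ∑ j, (∑ k, |x i k - x j k|) * ξ i * ξ j ≠ 0) := by
  have hwne : ∀ k, w k ≠ 0 := fun k => (hw k).ne'
  have key : ∀ ξ : Fin (m+1) → ℝ, ∑ i, ξ i = 0 →
      ∑ i, ∑ j, (∑ k, |x i k - x j k|) * ξ i * ξ j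
        = -(2 * ∑ k, (∑ i, ξ i * x i k) ^ 2 / w k) := by
    intro ξ hξ
    have step1 : ∀ i j : Fin (m+1), (∑ k, |x i k - x j k|) * ξ i * ξ j
        = ∑ k, (x i k * ξ i * ξ j + x j k * ξ i * ξ j
            - 2 * ((ξ i * x i k) * (ξ j * x j k)) / w k) := by
      intro i j
      rw [Finset.sum_mul, Finset.sum_mul]
      refine Finset.sum_congr rfl fun k _ => ?_
      have hk := hwne k
      rcases hxH i k with h1 | h1 <;> rcases hxH j k with h2 | h2 <;> rw [h1, h2]
      · simp
      · rw [zero_sub, abs_neg, abs_of_pos (hw k)]; field_simp; ring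
      · rw [sub_zero, abs_of_pos (hw k)]; field_simp; ring
      · rw [sub_self, abs_zero]; field_simp; ring
    simp only [step1]
    have swap : (∑ i, ∑ j, ∑ k, (x i k * ξ i * ξ j + x j k * ξ i * ξ j
            - 2 * ((ξ i * x i k) * (ξ j * x j k)) / w k))
        = ∑ k, ∑ i : Fin (m+1), ∑ j : Fin (m+1), (x i k * ξ i * ξ j + x j k * ξ i * ξ j
            - 2 * ((ξ i * x i k) * (ξ j * x j k)) / w k) := by
      calc (∑ i, ∑ j, ∑ k, (x i k * ξ i * ξ j + x j k * ξ i * ξ j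
              - 2 * ((ξ i * x i k) * (ξ j * x j k)) / w k))
          = ∑ i : Fin (m+1), ∑ k : Fin n, ∑ j : Fin (m+1), (x i k * ξ i * ξ j
              + x j k * ξ i * ξ j - 2 * ((ξ i * x i k) * (ξ j * x j k)) / w k) :=
            Finset.sum_congr rfl fun i _ => Finset.sum_comm
        _ = _ := Finset.sum_comm
    rw [swap, Finset.mul_sum, ← Finset.sum_neg_distrib]
    refine Finset.sum_congr rfl fun k _ => ?_
    have e1 : ∑ i : Fin (m+1), ∑ j : Fin (m+1), x i k * ξ i * ξ j = 0 := by
      simp [← Finset.mul_sum, hξ]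
    have e2 : ∑ i : Fin (m+1), ∑ j : Fin (m+1), x j k * ξ i * ξ j = 0 := by
      have : ∀ i : Fin (m+1), ∑ j : Fin (m+1), x j k * ξ i * ξ j
          = ξ i * ∑ j : Fin (m+1), x j k * ξ j := by
        intro i; rw [Finset.mul_sum]; exact Finset.sum_congr rfl fun j _ => by ring
      simp only [this, ← Finset.sum_mul, hξ, zero_mul]
    have e3 : ∑ i : Fin (m+1), ∑ j : Fin (m+1), (ξ i * x i k) * (ξ j * x j k)
        = (∑ i, ξ i * x i k) ^ 2 := by
      rw [sq, Finset.sum_mul_sum]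
    calc ∑ i : Fin (m+1), ∑ j : Fin (m+1), (x i k * ξ i * ξ j + x j k * ξ i * ξ j
            - 2 * ((ξ i * x i k) * (ξ j * x j k)) / w k)
        = (∑ i : Fin (m+1), ∑ j : Fin (m+1), x i k * ξ i * ξ j)
          + (∑ i : Fin (m+1), ∑ j : Fin (m+1), x j k * ξ i * ξ j)
          - (2 / w k) * ∑ i : Fin (m+1), ∑ j : Fin (m+1), (ξ i * x i k) * (ξ j * x j k) := by
          simp only [Finset.mul_sum, ← Finset.sum_add_distrib, ← Finset.sum_sub_distrib]
          refine Finset.sum_congr rfl fun i _ => Finset.sum_congr rfl fun j _ => by ring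
      _ = -(2 * ((∑ i, ξ i * x i k) ^ 2 / w k)) := by rw [e1, e2, e3]; ring
  constructor
  · intro hA ξ hξne hξ0 hQ
    rw [key ξ hξ0] at hQ
    have hS : ∑ k, (∑ i, ξ i * x i k) ^ 2 / w k = 0 := by linarith [hQ.symm] <;> linarith
    have hnn : ∀ k ∈ Finset.univ, (0:ℝ) ≤ (∑ i, ξ i * x i k) ^ 2 / w k :=
      fun k _ => div_nonneg (sq_nonneg _) (hw k).le
    have hall := (Finset.sum_eq_zero_iff_of_nonneg hnn).mp hS
    have hsq : ∀ k, (∑ i, ξ i * x i k) = 0 := by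
      intro k
      have hk := hall k (Finset.mem_univ k)
      rcases div_eq_zero_iff.mp hk with h | h
      · exact (pow_eq_zero_iff two_ne_zero).mp h
      · exact absurd h (hwne k)
    have hz : ∑ i, ξ i • x i = (0 : Fin n → ℝ) := by
      funext k
      simpa [Finset.sum_apply] using hsq k
    exact hξne (funext fun i =>
      affineIndependent_iff.mp hA Finset.univ ξ hξ0 hz i (Finset.mem_univ i))
  · intro h
    rw [affineIndependent_iff]
    intro s ξ' hs0 hsz
    classical
    set ξ : Fin (m+1) → ℝ := fun i => if i ∈ s then ξ' i else 0 with hξdef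
    have hξ0 : ∑ i, ξ i = 0 := by
      rw [Finset.sum_ite_mem, Finset.univ_inter]; exact hs0
    have hz : ∑ i, ξ i • x i = (0 : Fin n → ℝ) := by
      have : ∑ i, ξ i • x i = ∑ i ∈ s, ξ' i • x i := by
        calc ∑ i, ξ i • x i = ∑ i : Fin (m+1), (if i ∈ s then ξ' i • x i else 0) :=
              Finset.sum_congr rfl fun i _ => by
                by_cases hi : i ∈ s <;> simp [hξdef, hi]
          _ = ∑ i ∈ Finset.univ ∩ s, ξ' i • x i := Finset.sum_ite_mem _ _ _
          _ = ∑ i ∈ s, ξ' i • x i := by rw [Finset.univ_inter]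
      rw [this, hsz]
    intro e he
    by_contra hne
    have hξne : ξ ≠ 0 := by
      intro h0
      apply hne
      have := congrFun h0 e
      simpa [hξdef, he] using this
    apply h ξ hξne hξ0
    rw [key ξ hξ0]
    have hk : ∀ k, ∑ i, ξ i * x i k = 0 := by
      intro k
      have := congrFun hz k
      simpa [Finset.sum_apply] using this
    simp [hk]
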